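/- Let R be a ring. Then R is reduced (has no nonzero nilpotent elements) if and only if J#(R[X]) = {0}, i.e., the only polynomial f over R such that f^n ∈ J(R[X]) for some n ≥ 1 is the zero polynomial. -/

import Mathlib

/-- `J#(R)`: the set of elements `z` such that `z ^ n` lies in the Jacobson radical
(the intersection of the maximal left ideals) for some `n ≥ 1`. -/
def Jsharp (R : Type*) [Ring R] : Set R :=
  {z : R | ∃ n : ℕ, 1 ≤ n ∧ z ^ n ∈ Ideal.jacobson (⊥ : Ideal R)}

/-- A ring is a `UJ#` ring if `u - 1 ∈ J#(R)` for every unit `u`. -/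
def IsUJsharp (R : Type*) [Ring R] : Prop :=
  ∀ u : Rˣ, ((u : R) - 1) ∈ Jsharp R

open Polynomial

section Reduced
variable {R : Type*} [Ring R] [IsReduced R]

lemma red_comm {a b : R} (h : a * b = 0) : b * a = 0 := by
  have h2 : (b * a) * (b * a) = 0 := by
    rw [mul_assoc, ← mul_assoc a b a, h, zero_mul, mul_zero]
  exact (IsNilpotent.eq_zero ⟨2, by rw [sq]; exact h2⟩)

lemma red_mid {a b : R} (h : a * b = 0) (c : R) : a * c * b = 0 := by
  have hba := red_comm h
  have h2 : (a * c * b) * (a * c * b) = 0 := by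
    simp only [mul_assoc]
    rw [← mul_assoc b a (c * b), hba]; simp
  exact (IsNilpotent.eq_zero ⟨2, by rw [sq]; exact h2⟩)

lemma red_sq_left {a b : R} (h : a * (a * b) = 0) : a * b = 0 := by
  have h1 : (a * b) * a = 0 := red_comm h
  have h2 : (a * b) * (a * b) = 0 := by rw [← mul_assoc, h1, zero_mul]
  exact (IsNilpotent.eq_zero ⟨2, by rw [sq]; exact h2⟩)

lemma poly_sq (f : R[X]) (h : f * f = 0) : f = 0 := by
  by_contra hf
  have hc := Polynomial.coeff_mul_degree_add_degree f f
  rw [h, coeff_zero] at hc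
  have : f.leadingCoeff = 0 := IsNilpotent.eq_zero ⟨2, by rw [sq]; exact hc.symm⟩
  exact hf (leadingCoeff_eq_zero.mp this)

lemma poly_pow : ∀ (n : ℕ) (f : R[X]), f ^ n = 0 → f = 0 := by
  intro n
  induction n using Nat.strong_induction_on with
  | _ n ih =>
    intro f hf
    match n, hf with
    | 0, hf => 
      rw [pow_zero] at hf
      calc f = f * 1 := (mul_one f).symm
        _ = f * 0 := by rw [hf]
        _ = 0 := mul_zero f
    | 1, hf => simpa using hf
    | (k+2), hf =>
      have h2 : (f ^ (k+1)) * (f ^ (k+1)) = 0 := by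
        rw [← pow_add]
        have he : (k+1)+(k+1) = (k+2)+k := by omega
        rw [he, pow_add, hf, zero_mul]
      exact ih (k+1) (by omega) f (poly_sq _ h2)

instance poly_reduced : IsReduced R[X] :=
  ⟨fun f ⟨n, hn⟩ => poly_pow n f hn⟩

end Reduced

section Units
variable {R : Type*} [Ring R] [IsReduced R]

lemma unit_natDegree_eq_zero {p q : R[X]} (hpq : p * q = 1) (hqp : q * p = 1) :
    p.natDegree = 0 := by
  rcases subsingleton_or_nontrivial R[X] with hs | hnt
  · rw [Subsingleton.elim p 0, natDegree_zero]
  by_contra hm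
  set m := p.natDegree with hmdef
  set n := q.natDegree with hndef
  have hm1 : 1 ≤ m := Nat.one_le_iff_ne_zero.mpr hm
  have key : ∀ r, r ≤ n → p.coeff m * q.coeff (n - r) = 0 := by
    intro r
    induction r using Nat.strong_induction_on with
    | _ r ih =>
      intro hr
      have hk : (p * q).coeff (m + (n - r)) = 0 := by
        rw [hpq, coeff_one, if_neg (by omega)]
      rw [coeff_mul] at hk
      have hsum : ∑ x ∈ Finset.HasAntidiagonal.antidiagonal (m + (n - r)),
          p.coeff m * (p.coeff x.1 * q.coeff x.2) = 0 := by
        rw [← Finset.mul_sum, hk, mul_zero]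
      rw [Finset.sum_eq_single (m, n - r)] at hsum
      · exact red_sq_left hsum
      · intro x hx hne
        have hx' : x.1 + x.2 = m + (n - r) := Finset.HasAntidiagonal.mem_antidiagonal.mp hx
        by_cases h1 : m < x.1
        · rw [coeff_eq_zero_of_natDegree_lt h1, zero_mul, mul_zero]
        · have hx1 : x.1 < m := by
            rcases lt_or_eq_of_le (not_lt.mp h1) with h | h
            · exact h
            · exfalso; apply hne
              have : x.2 = n - r := by omega
              exact Prod.ext h this
          by_cases h2 : n < x.2
          · rw [coeff_eq_zero_of_natDegree_lt h2, mul_zero, mul_zero]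
          · have hs : x.2 = n - (n - x.2) := by omega
            have hih := ih (n - x.2) (by omega) (by omega)
            have h0 : p.coeff m * q.coeff x.2 = 0 := by rw [hs]; exact hih
            rw [← mul_assoc]
            exact red_mid h0 (p.coeff x.1)
      · intro hnotmem
        exact absurd (Finset.HasAntidiagonal.mem_antidiagonal.mpr (rfl : (m, n - r).1 + (m, n - r).2 = m + (n - r))) hnotmem
  have hmb0 : p.coeff m * q.coeff 0 = 0 := by
    have := key n le_rfl
    rwa [Nat.sub_self] at this
  have hb0a0 : q.coeff 0 * p.coeff 0 = 1 := by
    have := congrArg (fun f : R[X] => f.coeff 0) hqp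
    simpa [mul_coeff_zero, coeff_one] using this
  have hlc : p.coeff m = 0 := by
    calc p.coeff m = p.coeff m * (q.coeff 0 * p.coeff 0) := by rw [hb0a0, mul_one]
      _ = (p.coeff m * q.coeff 0) * p.coeff 0 := by rw [mul_assoc]
      _ = 0 := by rw [hmb0, zero_mul]
  have hp0 : p ≠ 0 := by
    intro h
    rw [h, zero_mul] at hpq
    exact zero_ne_one hpq
  exact hp0 (leadingCoeff_eq_zero.mp hlc)

end Units

section Jac
variable {S : Type*} [Ring S]

lemma jac_unit {x : S} (hx : x ∈ Ideal.jacobson (⊥ : Ideal S)) (y : S) :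
    ∃ z : S, z * (y * x + 1) = 1 ∧ (y * x + 1) * z = 1 := by
  obtain ⟨z, hz⟩ := Ideal.mem_jacobson_iff.mp hx y
  rw [Ideal.mem_bot, sub_eq_zero] at hz
  have hz1 : z * (y * x + 1) = 1 := by rw [mul_add, mul_one, ← mul_assoc]; exact hz
  have hzeq : z = 1 - z * y * x := eq_sub_of_add_eq' hz
  have hmem : -(z * y * x) ∈ Ideal.jacobson (⊥ : Ideal S) :=
    neg_mem (Ideal.mul_mem_left _ (z * y) hx)
  obtain ⟨w, hw⟩ := Ideal.mem_jacobson_iff.mp hmem 1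
  rw [Ideal.mem_bot, sub_eq_zero] at hw
  have hwz : w * z = 1 := by
    calc w * z = w * (1 - z * y * x) := by rw [← hzeq]
      _ = w - w * (z * y * x) := by rw [mul_sub, mul_one]
      _ = w * 1 * (-(z * y * x)) + w := by rw [mul_one, mul_neg, neg_add_eq_sub]
      _ = 1 := hw
  have hweq : w = y * x + 1 := by
    calc w = w * (z * (y * x + 1)) := by rw [hz1, mul_one]
      _ = (w * z) * (y * x + 1) := by rw [mul_assoc]
      _ = y * x + 1 := by rw [hwz, one_mul]
  exact ⟨z, hz1, hweq ▸ hwz⟩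

end Jac

lemma jsharp_poly_zero {R : Type*} [Ring R] [IsReduced R] {f : R[X]} (k : ℕ)
    (hk : f ^ k ∈ Ideal.jacobson (⊥ : Ideal R[X])) : f = 0 := by
  obtain ⟨z, hz1, hz2⟩ := jac_unit hk (X : R[X])
  have hdeg : (X * f ^ k + 1 : R[X]).natDegree = 0 := unit_natDegree_eq_zero hz2 hz1
  have hg : f ^ k = 0 := by
    ext i
    have h1 : (X * f ^ k + 1 : R[X]).coeff (i + 1) = 0 :=
      coeff_eq_zero_of_natDegree_lt (by omega)
    rw [coeff_add, coeff_one, if_neg (by omega), add_zero, coeff_X_mul] at h1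
    simpa using h1
  exact poly_pow k f hg

theorem isReduced_iff_jsharp_polynomial_eq_zero (R : Type*) [Ring R] :
    IsReduced R ↔ Jsharp (Polynomial R) = {0} := by
  constructor
  · intro hred
    haveI := hred
    ext f
    simp only [Jsharp, Set.mem_setOf_eq, Set.mem_singleton_iff]
    constructor
    · rintro ⟨k, _, hk⟩
      exact jsharp_poly_zero k hk
    · rintro rfl
      exact ⟨1, le_rfl, by rw [pow_one]; exact (Ideal.jacobson (⊥ : Ideal R[X])).zero_mem⟩
  · intro h
    refine ⟨fun a ⟨k, hk⟩ => ?_⟩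
    have hpow : (C a : R[X]) ^ (k + 1) = 0 := by
      rw [← map_pow, pow_succ, hk, zero_mul, map_zero]
    have hmem : (C a : R[X]) ∈ Jsharp R[X] :=
      ⟨k + 1, Nat.le_add_left 1 k, by rw [hpow]; exact (Ideal.jacobson (⊥ : Ideal R[X])).zero_mem⟩
    rw [h] at hmem
    exact C_eq_zero.mp hmem
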